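/- Let φ₁ be the binary morphism with φ₁(0) = 01100100101101001011010010 and φ₁(1) = 0110101100110101100101001100101001, and let φ₂ be the binary morphism with φ₂(0) = 01001011010010110100100110 and φ₂(1) = 1001010011001010011010110011010110. Then φ₁ and φ₂ preserve cubefreeness: for every cubefree binary word w, both φ₁(w) and φ₂(w) are cubefree. -/

import Mathlib

/-- A cube is a word of the form XXX with X nonempty. -/
def IsCube {α : Type*} (w : List α) : Prop :=
  ∃ X : List α, X ≠ [] ∧ w = X ++ X ++ X

/-- A word contains a cube if some factor (contiguous subword) of it is a cube. -/
def HasCube {α : Type*} (w : List α) : Prop :=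
  ∃ u, u <:+: w ∧ IsCube u

/-- A word is cubefree if none of its factors is a cube. -/
def CubeFree {α : Type*} (w : List α) : Prop := ¬ HasCube w

/-- Apply the binary morphism determined by letter images `h` to a word. -/
def applyMorphism {α : Type*} (h : α → List α) (w : List α) : List α := w.flatMap h

/-- The binary morphism φ₁, given by its images of the letters 0 and 1. -/
def phi1 : Fin 2 → List (Fin 2) := fun a =>
  if a = 0 then [0,1,1,0,0,1,0,0,1,0,1,1,0,1,0,0,1,0,1,1,0,1,0,0,1,0]
  else [0,1,1,0,1,0,1,1,0,0,1,1,0,1,0,1,1,0,0,1,0,1,0,0,1,1,0,0,1,0,1,0,0,1]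

/-- The binary morphism φ₂, given by its images of the letters 0 and 1. -/
def phi2 : Fin 2 → List (Fin 2) := fun a =>
  if a = 0 then [0,1,0,0,1,0,1,1,0,1,0,0,1,0,1,1,0,1,0,0,1,0,0,1,1,0]
  else [1,0,0,1,0,1,0,0,1,1,0,0,1,0,1,0,0,1,1,0,1,0,1,1,0,0,1,1,0,1,0,1,1,0]

namespace CFAux
open List

abbrev Bin := List (Fin 2)

abbrev M (w : Bin) : Bin := applyMorphism phi1 w

/-! ### extraction of factors -/

def ext {α : Type*} (l : List α) (p L : ℕ) : List α := (l.drop p).take L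

lemma ext_length {α : Type*} (l : List α) {p L : ℕ} (h : p + L ≤ l.length) :
    (ext l p L).length = L := by
  simp only [ext, length_take, length_drop]; omega

lemma ext_infix {α : Type*} (l : List α) (p L : ℕ) : ext l p L <:+: l :=
  (take_prefix _ _).isInfix.trans (drop_suffix p l).isInfix

lemma ext_prefix {α : Type*} {l₁ l₂ : List α} (h : l₁ <+: l₂) {p L : ℕ}
    (hL : p + L ≤ l₁.length) : ext l₁ p L = ext l₂ p L := by
  obtain ⟨t, rfl⟩ := h
  unfold ext
  rw [drop_append, Nat.sub_eq_zero_of_le (by omega), drop_zero,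
    take_append_of_le_length (by rw [length_drop]; omega)]

lemma ext_append_left {α : Type*} (a b : List α) (p L : ℕ) :
    ext (a ++ b) (a.length + p) L = ext b p L := by
  unfold ext; rw [drop_length_add_append]

lemma ext_getElem {α : Type*} (l : List α) {p L x : ℕ} (hx : x < L) (h : p + L ≤ l.length) :
    (ext l p L)[x]'(by rw [ext_length l h]; exact hx) = l[p+x]'(by omega) := by
  simp [ext]

/-! ### basic facts about the morphism -/

lemma phi_len : ∀ c : Fin 2, 26 ≤ (phi1 c).length ∧ (phi1 c).length ≤ 34 := by decide

lemma M_cons (a : Fin 2) (t : Bin) : M (a :: t) = phi1 a ++ M t := by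
  simp [applyMorphism]

lemma M_append (u v : Bin) : M (u ++ v) = M u ++ M v := by
  simp [applyMorphism]

lemma M_len_lb : ∀ w : Bin, 26 * w.length ≤ (M w).length := by
  intro w; induction w with
  | nil => simp [applyMorphism]
  | cons a t ih =>
    rw [M_cons, length_append, length_cons]
    have := (phi_len a).1
    omega

/-! ### block boundaries -/

def bnd (w : Bin) (j : ℕ) : ℕ := (M (w.take j)).length

lemma bnd_zero (w : Bin) : bnd w 0 = 0 := rfl

lemma bnd_mono {w : Bin} {j k : ℕ} (h : j ≤ k) : bnd w j ≤ bnd w k := by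
  unfold bnd
  conv_rhs => rw [← take_append_drop j (w.take k)]
  rw [take_take, Nat.min_eq_left h, M_append, length_append]
  omega

lemma bnd_succ {w : Bin} {j : ℕ} {c : Fin 2} {t : Bin} (h : w.drop j = c :: t) :
    bnd w (j+1) = bnd w j + (phi1 c).length := by
  have hj : w[j]? = some c := by
    have := List.getElem?_drop (xs := w) (i := j) (j := 0)
    rw [h] at this; simpa using this.symm
  unfold bnd
  rw [take_succ, hj, M_append, length_append]
  simp [applyMorphism]

lemma bnd_lt {w : Bin} {j : ℕ} (h : j < w.length) : bnd w j < bnd w (j+1) := by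
  rw [bnd_succ (List.drop_eq_getElem_cons h)]
  have := (phi_len (w[j]'h)).1
  omega

lemma bnd_strict {w : Bin} {j k : ℕ} (hjk : j < k) (hw : j < w.length) :
    bnd w j < bnd w k :=
  lt_of_lt_of_le (bnd_lt hw) (bnd_mono hjk)

lemma bnd_inj {w : Bin} {j k : ℕ} (hj : j ≤ w.length) (hk : k ≤ w.length)
    (h : bnd w j = bnd w k) : j = k := by
  rcases lt_trichotomy j k with hlt | he | hlt
  · exact absurd h (Nat.ne_of_lt (bnd_strict hlt (by omega)))
  · exact he
  · exact absurd h.symm (Nat.ne_of_lt (bnd_strict hlt (by omega)))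

lemma bnd_length (w : Bin) : bnd w w.length = (M w).length := by
  unfold bnd; rw [take_length]

lemma bnd_le (w : Bin) (j : ℕ) : bnd w j ≤ (M w).length := by
  unfold bnd
  conv_rhs => rw [← take_append_drop j w]
  rw [M_append, length_append]; omega

lemma lt_of_drop_cons {w : Bin} {j : ℕ} {c : Fin 2} {t : Bin} (h : w.drop j = c :: t) :
    j < w.length := by
  by_contra hc
  rw [drop_eq_nil_of_le (by omega)] at h
  simp at h

lemma blockContentAt {w : Bin} {j : ℕ} {c : Fin 2} {t : Bin} (h : w.drop j = c :: t)
    {r L : ℕ} (hrL : r + L ≤ (phi1 c).length) :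
    ext (M w) (bnd w j + r) L = ext (phi1 c) r L := by
  have hw : M w = M (w.take j) ++ M (w.drop j) := by rw [← M_append, take_append_drop]
  rw [hw]
  rw [show bnd w j + r = (M (w.take j)).length + r from rfl, ext_append_left, h, M_cons]
  exact (ext_prefix (prefix_append _ _) hrL).symm

lemma blockContent {w : Bin} {j : ℕ} {c : Fin 2} {t : Bin} (h : w.drop j = c :: t) :
    ext (M w) (bnd w j) (phi1 c).length = phi1 c := by
  have := blockContentAt h (r := 0) (L := (phi1 c).length) (by omega)
  simpa [ext] using this

/-! ### position decomposition -/

lemma posDecomp : ∀ (w : Bin) (q : ℕ), q < (M w).length →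
    ∃ j c t r, w.drop j = c :: t ∧ r < (phi1 c).length ∧ q = bnd w j + r ∧
      (M w).drop q = (M (c :: t)).drop r := by
  intro w
  induction w with
  | nil => intro q hq; simp [applyMorphism] at hq
  | cons a w ih =>
    intro q hq
    by_cases h : q < (phi1 a).length
    · exact ⟨0, a, w, q, rfl, h, by simp [bnd_zero], rfl⟩
    · rw [M_cons, length_append] at hq
      obtain ⟨j, c, t, r, h1, h2, h3, h4⟩ := ih (q - (phi1 a).length) (by omega)
      have hbnd : bnd (a :: w) (j+1) = (phi1 a).length + bnd w j := by
        unfold bnd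
        rw [take_succ_cons, M_cons, length_append]
      refine ⟨j+1, c, t, r, by simpa using h1, h2, by omega, ?_⟩
      rw [M_cons, show q = (phi1 a).length + (q - (phi1 a).length) by omega, drop_length_add_append, h4]

/-! ### the alignment finite check -/

lemma checkAlignAux : ∀ (c d₁ d₂ d₃ : Fin 2), ∀ r < 34,
    r < (phi1 d₁).length → ext (M [d₁,d₂,d₃]) r (phi1 c).length = phi1 c →
    r = 0 ∧ d₁ = c := by decide

lemma lastDistinct : ∀ a b : Fin 2,
    ext (phi1 a) ((phi1 a).length - 1) 1 = ext (phi1 b) ((phi1 b).length - 1) 1 → a = b := by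
  decide

lemma align {w : Bin} {c : Fin 2} {q : ℕ}
    (hq : q + (phi1 c).length ≤ (M w).length)
    (he : ext (M w) q (phi1 c).length = phi1 c) :
    ∃ j t, w.drop j = c :: t ∧ q = bnd w j := by
  have hq' : q < (M w).length := by have := (phi_len c).1; omega
  obtain ⟨j, c', t, r, h1, h2, h3, h4⟩ := posDecomp w q hq'
  have hlenMct : (M (c' :: t)).length = (phi1 c').length + (M t).length := by
    rw [M_cons, length_append]
  have hext : ext (M (c' :: t)) r (phi1 c).length = phi1 c := by
    unfold ext; rw [← h4]; exact he
  have hlen4 : (M w).length - q = (M (c' :: t)).length - r := by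
    have := congrArg List.length h4
    simpa using this
  have hrtot : r + (phi1 c).length ≤ (M (c' :: t)).length := by omega
  -- pad to length ≥ 3
  have hpad : M (c' :: t) <+: M ((c' :: t) ++ [0,0,0]) := by
    rw [M_append]; exact prefix_append _ _
  have e1 := ext_prefix hpad hrtot
  set u : Bin := (c' :: t) ++ [0,0,0] with hu
  set v : Bin := u.take 3 with hvdef
  have hv3 : v.length = 3 := by
    simp only [hvdef, length_take, hu, length_append, length_cons]
    omega
  have hpre2 : M v <+: M u := by
    conv_rhs => rw [← take_append_drop 3 u]
    rw [M_append]; exact prefix_append _ _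
  have hMv : 78 ≤ (M v).length := by
    have := M_len_lb v; rw [hv3] at this; omega
  have hr33 : r < 34 := lt_of_lt_of_le h2 (phi_len c').2
  have e2 := ext_prefix hpre2 (p := r) (L := (phi1 c).length)
    (by have := (phi_len c).2; omega)
  have hvext : ext (M v) r (phi1 c).length = phi1 c := by
    rw [e2, ← e1, hext]
  obtain ⟨d₁, d₂, d₃, hv'⟩ := List.length_eq_three.mp hv3
  have hd1 : d₁ = c' := by
    have : v = c' :: (t ++ [0,0,0]).take 2 := by
      rw [hvdef, hu, cons_append, take_succ_cons]
    rw [hv'] at this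
    exact (List.cons.injEq _ _ _ _).mp this |>.1
  have := checkAlignAux c d₁ d₂ d₃ r hr33 (by rw [hd1]; exact h2) (by rw [← hv']; exact hvext)
  obtain ⟨hr0, hcc⟩ := this
  refine ⟨j, t, ?_, by omega⟩
  rw [h1]; congr 1
  rw [← hd1, hcc]

/-! ### content shifts inside a cube -/

lemma shiftZ {X rest : Bin} {p L : ℕ} (h : p + L ≤ X.length + X.length) :
    ext (X ++ (X ++ (X ++ rest))) (X.length + p) L = ext (X ++ (X ++ (X ++ rest))) p L := by
  have hp1 : X ++ X <+: X ++ (X ++ rest) := ⟨rest, by simp⟩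
  have hp2 : X ++ X <+: X ++ (X ++ (X ++ rest)) := ⟨X ++ rest, by simp⟩
  have hL : p + L ≤ (X ++ X).length := by simpa using h
  rw [ext_append_left, ← ext_prefix hp1 hL, ← ext_prefix hp2 hL]

lemma contentShift {w X pre post : Bin} (hdec : M w = pre ++ (X ++ X ++ X) ++ post)
    {p L : ℕ} (h1 : pre.length ≤ p) (h2 : p + L ≤ pre.length + 2 * X.length) :
    ext (M w) (p + X.length) L = ext (M w) p L := by
  obtain ⟨p', rfl⟩ : ∃ p', p = pre.length + p' := ⟨p - pre.length, by omega⟩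
  have hZ : M w = pre ++ (X ++ (X ++ (X ++ post))) := by rw [hdec]; simp [append_assoc]
  rw [hZ, add_assoc, ext_append_left, ext_append_left, add_comm p' X.length,
    shiftZ (by omega)]

lemma MwLen {w X pre post : Bin} (hdec : M w = pre ++ (X ++ X ++ X) ++ post) :
    (M w).length = pre.length + 3 * X.length + post.length := by
  rw [hdec]; simp; omega

lemma upShift {w X pre post : Bin} (hdec : M w = pre ++ (X ++ X ++ X) ++ post)
    {j : ℕ} {c : Fin 2} {t : Bin} (hj : w.drop j = c :: t)
    (h1 : pre.length ≤ bnd w j)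
    (h2 : bnd w j + (phi1 c).length ≤ pre.length + 2 * X.length) :
    ∃ j' t', w.drop j' = c :: t' ∧ bnd w j' = bnd w j + X.length := by
  have hsh : ext (M w) (bnd w j + X.length) (phi1 c).length = phi1 c := by
    rw [contentShift hdec h1 h2]; exact blockContent hj
  have hNl := MwLen hdec
  obtain ⟨j', t', hd', hb'⟩ := align (by omega) hsh
  exact ⟨j', t', hd', hb'.symm⟩

lemma downShift {w X pre post : Bin} (hdec : M w = pre ++ (X ++ X ++ X) ++ post)
    {j : ℕ} {c : Fin 2} {t : Bin} (hj : w.drop j = c :: t)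
    (h1 : pre.length + X.length ≤ bnd w j)
    (h2 : bnd w j + (phi1 c).length ≤ pre.length + 3 * X.length) :
    ∃ j' t', w.drop j' = c :: t' ∧ bnd w j' + X.length = bnd w j := by
  have hp : bnd w j - X.length + X.length = bnd w j := by omega
  have hsh : ext (M w) (bnd w j - X.length) (phi1 c).length = phi1 c := by
    rw [← contentShift hdec (by omega) (by omega), hp]
    exact blockContent hj
  have hNl := MwLen hdec
  obtain ⟨j', t', hd', hb'⟩ := align (by omega) hsh
  exact ⟨j', t', hd', by omega⟩

/-! ### the chain of letter equalities -/

lemma chain {w X pre post : Bin} (hdec : M w = pre ++ (X ++ X ++ X) ++ post)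
    {d : ℕ} (hd : 1 ≤ d) {js : ℕ} (K : ℕ) (hjs : pre.length ≤ bnd w js)
    (h0 : bnd w (js + d) = bnd w js + X.length ∧ js + d ≤ w.length)
    (hb : ∀ k, k < K → bnd w (js + k + 1) ≤ pre.length + 2 * X.length) :
    ∀ k, k ≤ K → (bnd w (js + k + d) = bnd w (js + k) + X.length ∧ js + k + d ≤ w.length) ∧
      (∀ k', k' < k → ∃ (c : Fin 2) (t t' : Bin),
        w.drop (js + k') = c :: t ∧ w.drop (js + k' + d) = c :: t') := by
  intro k
  induction k with
  | zero => intro _; exact ⟨by simpa using h0, by omega⟩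
  | succ k ih =>
    intro hkK
    obtain ⟨⟨hInv, hle⟩, hpairs⟩ := ih (by omega)
    have hjlt : js + k < w.length := by omega
    obtain ⟨c, hdropc⟩ : ∃ c, w.drop (js + k) = c :: w.drop (js + k + 1) :=
      ⟨w[js + k]'hjlt, List.drop_eq_getElem_cons hjlt⟩
    have hbk := hb k (by omega)
    have hsucc : bnd w (js + k + 1) = bnd w (js + k) + (phi1 c).length := bnd_succ hdropc
    obtain ⟨j', t', hd', hb'⟩ := upShift hdec hdropc
      (le_trans hjs (bnd_mono (by omega))) (by omega)
    have hj'lt : j' < w.length := lt_of_drop_cons hd'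
    have hj'eq : j' = js + k + d := bnd_inj (by omega) hle (by rw [hb', hInv])
    subst hj'eq
    have hsucc' : bnd w (js + k + d + 1) = bnd w (js + k + d) + (phi1 c).length :=
      bnd_succ hd'
    refine ⟨⟨by rw [show js + (k+1) + d = js + k + d + 1 by omega, hsucc',
        show js + (k+1) = js + k + 1 by omega, hsucc, hInv]; omega,
      by omega⟩, ?_⟩
    intro k' hk'
    rcases Nat.lt_or_ge k' k with h | h
    · exact hpairs k' h
    · have : k' = k := by omega
      subst this
      exact ⟨c, _, t', hdropc, hd'⟩

/-! ### extracting a cube in `w` from a periodic run of letters -/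

lemma extractCube {w : Bin} {s d : ℕ} (hd : 1 ≤ d) (hlen : s + 3*d ≤ w.length)
    (hp : ∀ j, s ≤ j → j < s + 2*d → ∃ (c : Fin 2) (t t' : Bin),
      w.drop j = c :: t ∧ w.drop (j+d) = c :: t') :
    HasCube w := by
  have hget : ∀ j (_ : s ≤ j) (_ : j < s + 2*d),
      w[j]'(by omega) = w[j+d]'(by omega) := by
    intro j hj1 hj2
    obtain ⟨c, t, t', h1, h2⟩ := hp j hj1 hj2
    have e1 : w[j]'(by omega) = c := by
      have := List.drop_eq_getElem_cons (l := w) (i := j) (by omega)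
      rw [h1] at this
      exact ((List.cons.injEq _ _ _ _).mp this.symm).1
    have e2 : w[j+d]'(by omega) = c := by
      have := List.drop_eq_getElem_cons (l := w) (i := j+d) (by omega)
      rw [h2] at this
      exact ((List.cons.injEq _ _ _ _).mp this.symm).1
    rw [e1, e2]
  have hexteq : ∀ p, s ≤ p → p + d ≤ s + 2*d → ext w (p + d) d = ext w p d := by
    intro p hp1 hp2
    apply List.ext_getElem
    · rw [ext_length w (by omega), ext_length w (by omega)]
    · intro x h1 h2
      have hx : x < d := by rwa [ext_length w (by omega)] at h2
      rw [ext_getElem w hx (by omega), ext_getElem w hx (by omega)]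
      have := hget (p + x) (by omega) (by omega)
      simp only [show p + d + x = p + x + d by omega]
      exact this.symm
  have split : ext w s (3*d) = ext w s d ++ (ext w (s+d) d ++ ext w (s+2*d) d) := by
    unfold ext
    rw [show 3*d = d + (d + d) by ring, take_add, take_add, drop_drop, drop_drop,
      show s + d + d = s + 2*d by ring]
  have e12 : ext w (s+d) d = ext w s d := hexteq s le_rfl (by omega)
  have e23 : ext w (s+2*d) d = ext w (s+d) d := by
    have := hexteq (s+d) (by omega) (by omega)
    rwa [show s + d + d = s + 2*d by ring] at this
  refine ⟨ext w s (3*d), ext_infix w s (3*d), ext w s d, ?_, ?_⟩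
  · have : (ext w s d).length = d := ext_length w (by omega)
    intro hnil
    rw [hnil] at this
    simp at this
    omega
  · rw [split, e23, e12, append_assoc]

/-! ### the long-cube case -/

lemma long {w X pre post : Bin} (hdec : M w = pre ++ (X ++ X ++ X) ++ post)
    (hn : 34 ≤ X.length) : HasCube w := by
  classical
  have hMlen : (M w).length = pre.length + 3 * X.length + post.length := MwLen hdec
  have hex : ∃ j, pre.length ≤ bnd w j := ⟨w.length, by rw [bnd_length]; omega⟩
  obtain ⟨j₀, h0, hmin⟩ : ∃ j₀, pre.length ≤ bnd w j₀ ∧ ∀ j, j < j₀ → bnd w j < pre.length :=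
    ⟨Nat.find hex, Nat.find_spec hex, fun j hj => Nat.lt_of_not_le (Nat.find_min hex hj)⟩
  have hj0w : j₀ ≤ w.length := by
    by_contra hcon
    have := hmin w.length (by omega)
    rw [bnd_length] at this
    omega
  have he33 : bnd w j₀ ≤ pre.length + 33 := by
    rcases Nat.eq_zero_or_pos j₀ with h | h
    · subst h; rw [bnd_zero]; omega
    · obtain ⟨k, hk⟩ : ∃ k, j₀ = k + 1 := ⟨j₀ - 1, by omega⟩
      rw [hk]
      have hklt : k < w.length := by omega
      have hs := bnd_succ (List.drop_eq_getElem_cons hklt)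
      have h1 := hmin k (by omega)
      have h2 := (phi_len (w[k]'hklt)).2
      omega
  have hj0lt : j₀ < w.length := by
    rcases Nat.lt_or_ge j₀ w.length with h | h
    · exact h
    · have hje : j₀ = w.length := le_antisymm hj0w h
      rw [hje, bnd_length] at he33
      omega
  obtain ⟨c₀, hdrop0⟩ : ∃ c, w.drop j₀ = c :: w.drop (j₀+1) :=
    ⟨w[j₀]'hj0lt, List.drop_eq_getElem_cons hj0lt⟩
  have hlc₀ := phi_len c₀
  obtain ⟨j₁, t₁, hdrop1, hb1⟩ := upShift hdec hdrop0 h0 (by omega)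
  have hj₀j₁ : j₀ < j₁ := by
    by_contra hcon
    have := bnd_mono (w := w) (Nat.le_of_not_lt hcon)
    omega
  have hj1w : j₁ < w.length := lt_of_drop_cons hdrop1
  obtain ⟨d', hdd⟩ : ∃ d', j₁ = j₀ + (d' + 1) := ⟨j₁ - j₀ - 1, by omega⟩
  set d := d' + 1 with hddef
  have hd1 : 1 ≤ d := by omega
  have hInv0 : bnd w (j₀ + d) = bnd w j₀ + X.length ∧ j₀ + d ≤ w.length := by
    constructor
    · rw [← hdd]; exact hb1
    · omega
  have hchain1 := chain hdec hd1 d h0 hInv0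
    (fun k hk => by
      have hmono : bnd w (j₀ + k + 1) ≤ bnd w (j₀ + d) := bnd_mono (by omega)
      omega)
  obtain ⟨⟨hInvd, hlend⟩, hpairs1⟩ := hchain1 d le_rfl
  have h0' : pre.length ≤ bnd w (j₀ + d) := le_trans h0 (bnd_mono (by omega))
  by_cases he0 : bnd w j₀ = pre.length
  · -- the cube starts exactly at a block boundary
    have hchain2 := chain hdec hd1 d h0' ⟨hInvd, hlend⟩
      (fun k hk => by
        have hmono : bnd w (j₀ + d + k + 1) ≤ bnd w (j₀ + d + d) := bnd_mono (by omega)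
        omega)
    obtain ⟨⟨hInv2d, hlen2d⟩, hpairs2⟩ := hchain2 d le_rfl
    apply extractCube hd1 (s := j₀) (by omega)
    intro j hj1 hj2
    rcases Nat.lt_or_ge j (j₀ + d) with h | h
    · obtain ⟨c, t, t', ha', hb'⟩ := hpairs1 (j - j₀) (by omega)
      rw [show j₀ + (j - j₀) = j by omega] at ha'
      rw [show j₀ + (j - j₀) + d = j + d by omega] at hb'
      exact ⟨c, t, t', ha', hb'⟩
    · obtain ⟨c, t, t', ha', hb'⟩ := hpairs2 (j - (j₀ + d)) (by omega)
      rw [show j₀ + d + (j - (j₀ + d)) = j by omega] at ha'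
      rw [show j₀ + d + (j - (j₀ + d)) + d = j + d by omega] at hb'
      exact ⟨c, t, t', ha', hb'⟩
  · -- the cube starts strictly inside a block
    have hepos : pre.length < bnd w j₀ := lt_of_le_of_ne h0 (Ne.symm he0)
    have hj₀pos : 0 < j₀ := by
      rcases Nat.eq_zero_or_pos j₀ with h | h
      · rw [h, bnd_zero] at hepos; omega
      · exact h
    obtain ⟨p₀, rfl⟩ : ∃ p, j₀ = p + 1 := ⟨j₀ - 1, by omega⟩
    have hp₀lt : p₀ < w.length := by omega
    obtain ⟨a, hdropa⟩ : ∃ a, w.drop p₀ = a :: w.drop (p₀+1) :=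
      ⟨w[p₀]'hp₀lt, List.drop_eq_getElem_cons hp₀lt⟩
    have hsucca : bnd w (p₀ + 1) = bnd w p₀ + (phi1 a).length := bnd_succ hdropa
    have hminp := hmin p₀ (by omega)
    have hla := phi_len a
    have hpdlt : p₀ + d < w.length := by omega
    obtain ⟨b, hdropb⟩ : ∃ b, w.drop (p₀ + d) = b :: w.drop (p₀+d+1) :=
      ⟨w[p₀+d]'hpdlt, List.drop_eq_getElem_cons hpdlt⟩
    have hsuccb : bnd w (p₀ + d + 1) = bnd w (p₀ + d) + (phi1 b).length := bnd_succ hdropb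
    have hlb := phi_len b
    have hbid : bnd w (p₀ + d + 1) = bnd w (p₀ + 1) + X.length := by
      rw [show p₀ + d + 1 = p₀ + 1 + d by omega]; exact hInv0.1
    have hkey : ext (phi1 a) ((phi1 a).length - 1) 1
        = ext (phi1 b) ((phi1 b).length - 1) 1 := by
      have h1 : ext (M w) (bnd w p₀ + ((phi1 a).length - 1)) 1
          = ext (phi1 a) ((phi1 a).length - 1) 1 := blockContentAt hdropa (by omega)
      have h2 : ext (M w) (bnd w (p₀+d) + ((phi1 b).length - 1)) 1
          = ext (phi1 b) ((phi1 b).length - 1) 1 := blockContentAt hdropb (by omega)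
      have hshift : ext (M w) ((bnd w p₀ + ((phi1 a).length - 1)) + X.length) 1
          = ext (M w) (bnd w p₀ + ((phi1 a).length - 1)) 1 :=
        contentShift hdec (by omega) (by omega)
      rw [← h1, ← h2, ← hshift]
      congr 1
      omega
    have hab : a = b := lastDistinct a b hkey
    have hlab : (phi1 a).length = (phi1 b).length := by rw [hab]
    obtain ⟨⟨hInvd', _⟩, _⟩ := hchain1 d' (by omega)
    have hg1 : bnd w (p₀ + 1 + d') = bnd w (p₀ + d) := by
      rw [show p₀ + 1 + d' = p₀ + d by omega]
    have hchain2 := chain hdec hd1 d' h0' ⟨hInvd, hlend⟩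
      (fun k hk => by
        have hmono : bnd w (p₀ + 1 + d + k + 1) ≤ bnd w (p₀ + 1 + d' + d) :=
          bnd_mono (by omega)
        omega)
    obtain ⟨⟨hInv2d, hlen2d⟩, hpairs2⟩ := hchain2 d' le_rfl
    apply extractCube hd1 (s := p₀) (by omega)
    intro j hj1 hj2
    rcases Nat.eq_or_lt_of_le hj1 with h | h
    · subst h
      refine ⟨a, w.drop (p₀+1), w.drop (p₀+d+1), hdropa, ?_⟩
      rw [hab]; exact hdropb
    · rcases Nat.lt_or_ge j (p₀ + 1 + d) with h2 | h2
      · obtain ⟨c, t, t', ha', hb'⟩ := hpairs1 (j - (p₀ + 1)) (by omega)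
        rw [show p₀ + 1 + (j - (p₀ + 1)) = j by omega] at ha'
        rw [show p₀ + 1 + (j - (p₀ + 1)) + d = j + d by omega] at hb'
        exact ⟨c, t, t', ha', hb'⟩
      · obtain ⟨c, t, t', ha', hb'⟩ := hpairs2 (j - (p₀ + 1 + d)) (by omega)
        rw [show p₀ + 1 + d + (j - (p₀ + 1 + d)) = j by omega] at ha'
        rw [show p₀ + 1 + d + (j - (p₀ + 1 + d)) + d = j + d by omega] at hb'
        exact ⟨c, t, t', ha', hb'⟩

/-! ### short cubes : finite check -/

def cubeAtB (t : Bin) (dd : ℕ) : Bool :=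
  decide (t.take dd = ext t dd dd ∧ t.take dd = ext t (2*dd) dd)

def hasSmallCubeB (l : Bin) : Bool :=
  l.tails.any fun t => (List.range (min (t.length / 3) 33)).any fun k => cubeAtB t (k+1)

def wordsN : ℕ → List Bin
  | 0 => [[]]
  | n+1 => (wordsN n).flatMap fun t => [0::t, 1::t]

def wordsUpTo : ℕ → List Bin
  | 0 => wordsN 0
  | n+1 => wordsUpTo n ++ wordsN (n+1)

lemma wordsN_complete : ∀ v : Bin, v ∈ wordsN v.length := by
  intro v
  induction v with
  | nil => simp [wordsN]
  | cons a t ih =>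
    show a :: t ∈ (wordsN t.length).flatMap fun t => [0::t, 1::t]
    rw [List.mem_flatMap]
    refine ⟨t, ih, ?_⟩
    rcases a with ⟨av, ha⟩
    interval_cases av <;> simp

lemma wordsN_sub : ∀ n k, k ≤ n → ∀ v ∈ wordsN k, v ∈ wordsUpTo n := by
  intro n
  induction n with
  | zero => intro k hk v hv; rw [Nat.le_zero.mp hk] at hv; exact hv
  | succ n ih =>
    intro k hk v hv
    show v ∈ wordsUpTo n ++ wordsN (n+1)
    rw [List.mem_append]
    rcases Nat.lt_or_ge k (n+1) with h | h
    · exact Or.inl (ih k (by omega) v hv)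
    · have : k = n + 1 := by omega
      subst this
      exact Or.inr hv

lemma wordsUpTo_complete {v : Bin} (h : v.length ≤ 5) : v ∈ wordsUpTo 5 :=
  wordsN_sub 5 v.length h v (wordsN_complete v)

set_option maxHeartbeats 16000000 in
set_option maxRecDepth 100000 in
lemma checkShort :
    ((wordsUpTo 5).all fun v => hasSmallCubeB v || !hasSmallCubeB (M v)) = true := by
  decide

lemma smallComplete {l X : Bin} (hinf : X ++ X ++ X <:+: l) (hX : X ≠ [])
    (hn : X.length ≤ 33) : hasSmallCubeB l = true := by
  obtain ⟨p, s, hd⟩ := hinf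
  have hXlen : 1 ≤ X.length := List.length_pos_iff.mpr hX
  set t : Bin := X ++ (X ++ (X ++ s)) with ht
  have htl : t <:+ l := ⟨p, by rw [← hd]; simp [ht]⟩
  have htlen : t.length = 3 * X.length + s.length := by simp [ht]; omega
  apply List.any_eq_true.mpr
  refine ⟨t, (List.mem_tails _ _).mpr htl, ?_⟩
  apply List.any_eq_true.mpr
  refine ⟨X.length - 1, List.mem_range.mpr (by omega), ?_⟩
  have hX1 : X.length - 1 + 1 = X.length := by omega
  rw [hX1]
  apply decide_eq_true
  have e1 : t.take X.length = X := by
    rw [ht, take_append_of_le_length (by simp), take_length]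
  constructor
  · rw [e1]
    unfold ext
    rw [ht, drop_append_of_le_length (by simp), drop_length]
    show X = (([] : Bin) ++ (X ++ (X ++ s))).take X.length
    rw [nil_append, take_append_of_le_length (by simp), take_length]
  · rw [e1]
    unfold ext
    have ht2 : t = (X ++ X) ++ (X ++ s) := by rw [ht]; simp
    rw [ht2, drop_left' (by simp [two_mul]), take_append_of_le_length (by simp), take_length]

lemma smallSound {l : Bin} (h : hasSmallCubeB l = true) : HasCube l := by
  obtain ⟨t, htmem, h2⟩ := List.any_eq_true.mp h
  obtain ⟨k, hkmem, h3⟩ := List.any_eq_true.mp h2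
  have htl : t <:+ l := (List.mem_tails _ _).mp htmem
  have hk := List.mem_range.mp hkmem
  obtain ⟨e1, e2⟩ := of_decide_eq_true h3
  obtain ⟨dd, hDD⟩ : ∃ dd, dd = k + 1 := ⟨k + 1, rfl⟩
  rw [← hDD] at e1 e2
  have h3dd : 3 * dd ≤ t.length := by omega
  have hsplit : t.take (3*dd) = t.take dd ++ (ext t dd dd ++ ext t (2*dd) dd) := by
    unfold ext
    rw [show 3*dd = dd + (dd + dd) by ring, take_add, take_add, drop_drop,
      show dd + dd = 2*dd by ring]
  refine ⟨t.take (3*dd), (take_prefix _ _).isInfix.trans htl.isInfix,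
    t.take dd, ?_, ?_⟩
  · have : (t.take dd).length = dd := by simp; omega
    intro hnil
    rw [hnil] at this
    simp at this
    omega
  · rw [hsplit, ← e1, ← e2, append_assoc]

/-! ### covering a short factor by the image of a short factor -/

lemma cover {w u : Bin} (hu : u <:+: M w) (hul : u.length ≤ 99) (hne : u ≠ []) :
    ∃ v, v <:+: w ∧ u <:+: M v ∧ v.length ≤ 5 := by
  obtain ⟨pre, post, hd⟩ := hu
  have hune : 0 < u.length := List.length_pos_iff.mpr hne
  have hq : pre.length < (M w).length := by
    rw [← hd]
    simp
    omega
  obtain ⟨j, c, t, r, h1, h2, h3, h4⟩ := posDecomp w pre.length hq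
  have hdrop : (M w).drop pre.length = u ++ post := by
    rw [← hd, append_assoc, drop_left]
  have hupost : u ++ post = (M (c :: t)).drop r := by rw [← hdrop, h4]
  have hsuffw : c :: t <:+ w := h1 ▸ drop_suffix j w
  by_cases hlen5 : (c :: t).length ≤ 5
  · refine ⟨c :: t, hsuffw.isInfix, ?_, hlen5⟩
    have hpref : u <+: (M (c :: t)).drop r := ⟨post, hupost⟩
    exact hpref.isInfix.trans (drop_suffix r (M (c :: t))).isInfix
  · simp only [length_cons] at hlen5
    obtain ⟨v, hv⟩ : ∃ v : Bin, v = (c :: t).take 5 := ⟨_, rfl⟩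
    have hvsplit : v = c :: t.take 4 := by rw [hv, take_succ_cons]
    have hMv : (phi1 c).length + 104 ≤ (M v).length := by
      rw [hvsplit, M_cons, length_append]
      have h4t : (t.take 4).length = 4 := by simp; omega
      have := M_len_lb (t.take 4)
      rw [h4t] at this
      omega
    have hrML : r + u.length ≤ (M v).length := by omega
    have hsplit : M (c :: t) = M v ++ M ((c :: t).drop 5) := by
      rw [hv, ← M_append, take_append_drop]
    obtain ⟨L, hL⟩ : ∃ L, L = u.length := ⟨_, rfl⟩
    have huext : u = ext (M v) r L := by
      have e6 : ((M (c :: t)).drop r).take L = ext (M v) r L := by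
        rw [hsplit, drop_append_of_le_length (by omega),
          take_append_of_le_length (by rw [length_drop]; omega)]
        rfl
      rw [← e6, ← hupost, take_append_of_le_length (le_of_eq hL), hL, take_length]
    refine ⟨v, ?_, ?_, by rw [hvsplit]; simp⟩
    · rw [hv]
      exact ((take_prefix 5 (c :: t)).isInfix).trans hsuffw.isInfix
    · rw [huext]; exact ext_infix _ _ _

/-! ### main lemma for φ₁ -/

lemma cfM1 (w : Bin) (hw : CubeFree w) : CubeFree (M w) := by
  rintro ⟨u, hinf, X, hX, rfl⟩
  rcases Nat.lt_or_ge X.length 34 with hn | hn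
  · -- short case
    have hXlen : 1 ≤ X.length := List.length_pos_iff.mpr hX
    obtain ⟨v, hvw, huMv, hv5⟩ := cover hinf (by simp; omega)
      (List.length_pos_iff.mp (by simp; omega))
    have hvcf : hasSmallCubeB v = false := by
      by_contra hcon
      obtain ⟨u', hu1, hu2⟩ := smallSound (by rwa [Bool.not_eq_false] at hcon)
      exact hw ⟨u', hu1.trans hvw, hu2⟩
    have h1 := List.all_eq_true.mp checkShort v (wordsUpTo_complete hv5)
    rw [hvcf] at h1
    have h2 : hasSmallCubeB (M v) = false := by simpa using h1
    rw [smallComplete huMv hX (by omega)] at h2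
    exact Bool.noConfusion h2
  · obtain ⟨p, s', hd⟩ := hinf
    exact hw (long hd.symm hn)

/-! ### φ₂ via reversal -/

lemma phi2_eq (w : Bin) :
    applyMorphism phi2 w = (applyMorphism phi1 w.reverse).reverse := by
  unfold applyMorphism
  rw [List.reverse_flatMap, reverse_reverse,
    show (List.reverse ∘ phi1) = phi2 from funext (by decide)]

lemma hasCube_of_reverse {l : Bin} (h : HasCube l.reverse) : HasCube l := by
  obtain ⟨u, hinf, X, hX, rfl⟩ := h
  refine ⟨(X ++ X ++ X).reverse, ?_, X.reverse, ?_, by simp⟩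
  · have := (List.reverse_infix (l₁ := X ++ X ++ X) (l₂ := l.reverse)).mpr hinf
    rwa [reverse_reverse] at this
  · simpa using hX

lemma cubeFree_reverse {l : Bin} (h : CubeFree l) : CubeFree l.reverse := by
  intro hc
  exact h (hasCube_of_reverse hc)

end CFAux



theorem phi1_phi2_preserve_cubefreeness (w : List (Fin 2)) (hw : CubeFree w) :
    CubeFree (applyMorphism phi1 w) ∧ CubeFree (applyMorphism phi2 w) := by
  refine ⟨CFAux.cfM1 w hw, ?_⟩
  rw [CFAux.phi2_eq]
  exact CFAux.cubeFree_reverse (CFAux.cfM1 w.reverse (CFAux.cubeFree_reverse hw))
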